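/- Define F(x,y,v) := √y · coth((x−v)/2) for x, v ∈ ℝ with x ≠ v and y > 0. Then at every such point, coth((x−v)/2) · ∂F/∂x − (y/(2·sinh²((x−v)/2))) · ∂F/∂y + (3/2) · ∂²F/∂v² = 0. -/

import Mathlib

noncomputable def coth (x : ℝ) : ℝ := Real.cosh x / Real.sinh x

noncomputable def stripObs (x y v : ℝ) : ℝ := Real.sqrt y * coth ((x - v) / 2)

lemma hasDerivAt_coth (u : ℝ) (hu : Real.sinh u ≠ 0) :
    HasDerivAt coth (-1 / (Real.sinh u) ^ 2) u := by
  have h := (Real.hasDerivAt_cosh u).div (Real.hasDerivAt_sinh u) hu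
  refine h.congr_deriv ?_
  have hc := Real.cosh_sq_sub_sinh_sq u
  field_simp
  nlinarith [hc]

lemma sinh_half_ne (a b : ℝ) (h : a ≠ b) : Real.sinh ((a - b) / 2) ≠ 0 := by
  simp only [ne_eq, Real.sinh_eq_zero]
  intro hh
  apply h
  linarith

lemma deriv_v (x y : ℝ) (w : ℝ) (hw : x ≠ w) :
    HasDerivAt (fun t => stripObs x y t)
      (Real.sqrt y / (2 * (Real.sinh ((x - w) / 2)) ^ 2)) w := by
  have hs := sinh_half_ne x w hw
  have hinner : HasDerivAt (fun t : ℝ => (x - t) / 2) (-1 / 2) w := by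
    simpa using ((hasDerivAt_const w x).sub (hasDerivAt_id w)).div_const 2
  have h := ((hasDerivAt_coth _ hs).comp w hinner).const_mul (Real.sqrt y)
  refine h.congr_deriv ?_
  ring

theorem stmt6 (x y v : ℝ) (hxv : x ≠ v) (hy : 0 < y) :
    coth ((x - v) / 2) * deriv (fun t => stripObs t y v) x
      - (y / (2 * (Real.sinh ((x - v) / 2)) ^ 2)) * deriv (fun t => stripObs x t v) y
      + (3 / 2) * deriv (deriv (fun t => stripObs x y t)) v = 0 := by
  have hs := sinh_half_ne x v hxv
  have hsy : Real.sqrt y ≠ 0 := (Real.sqrt_pos.mpr hy).ne'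
  have hsq : Real.sqrt y * Real.sqrt y = y := Real.mul_self_sqrt hy.le
  -- deriv in x
  have hdx : deriv (fun t => stripObs t y v) x
      = Real.sqrt y * (-1 / (Real.sinh ((x - v) / 2)) ^ 2) * (1 / 2) := by
    have hinner : HasDerivAt (fun t : ℝ => (t - v) / 2) (1 / 2) x := by
      simpa using ((hasDerivAt_id x).sub (hasDerivAt_const x v)).div_const 2
    have h := (((hasDerivAt_coth _ hs).comp x hinner).const_mul (Real.sqrt y))
    simpa [stripObs, mul_comm, mul_assoc] using h.deriv
  -- deriv in y
  have hdy : deriv (fun t => stripObs x t v) y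
      = coth ((x - v) / 2) / (2 * Real.sqrt y) := by
    have h := (Real.hasDerivAt_sqrt hy.ne').mul_const (coth ((x - v) / 2))
    have := h.deriv
    simp only [stripObs] at this ⊢
    rw [this]; ring
  -- second deriv in v
  have hdv2 : deriv (deriv (fun t => stripObs x y t)) v
      = Real.sqrt y * Real.cosh ((x - v) / 2) / (2 * (Real.sinh ((x - v) / 2)) ^ 3) := by
    have hev : deriv (fun t => stripObs x y t)
        =ᶠ[nhds v] fun w => Real.sqrt y / (2 * (Real.sinh ((x - w) / 2)) ^ 2) := by
      filter_upwards [isOpen_ne.mem_nhds (Ne.symm hxv)] with w hw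
      exact (deriv_v x y w (Ne.symm hw)).deriv
    rw [hev.deriv_eq]
    have hD : HasDerivAt (fun w => 2 * (Real.sinh ((x - w) / 2)) ^ 2)
        (-2 * Real.sinh ((x - v) / 2) * Real.cosh ((x - v) / 2)) v := by
      have hinner : HasDerivAt (fun t : ℝ => (x - t) / 2) (-1 / 2) v := by
        simpa using ((hasDerivAt_const v x).sub (hasDerivAt_id v)).div_const 2
      have hsinh := (Real.hasDerivAt_sinh ((x - v) / 2)).comp v hinner
      have := (hsinh.pow 2).const_mul (2 : ℝ)
      refine this.congr_deriv ?_
      simp [Function.comp]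
      ring
    have hD0 : 2 * (Real.sinh ((x - v) / 2)) ^ 2 ≠ 0 := by positivity
    have h := (hasDerivAt_const v (Real.sqrt y)).div hD hD0
    rw [show (fun w => √y / (2 * Real.sinh ((x - w) / 2) ^ 2)) = ((fun _ => √y) / fun w => 2 * Real.sinh ((x - w) / 2) ^ 2) from rfl, h.deriv]
    field_simp
    ring
  rw [hdx, hdy, hdv2, coth]
  have hsq2 : Real.sqrt y ^ 2 = y := Real.sq_sqrt hy.le
  field_simp
  linear_combination (Real.cosh ((x - v) / 2)) * hsq2
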